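/- arXiv:1412.5025 — 5 statements merged into one kernel-verified Lean document; each statement's English description precedes it below -/
import Mathlib

section
/- Let c be a real number with c > b̄/ā and let q = (q_n)_{n≥0} be a nonnegative summable real sequence satisfying a_n·c·q_n = b_{n+1}·q_{n+1} for every n ≥ 0. Then q_n = 0 for every n ≥ 0. -/
open Finset

theorem becker_doring_stationary_states_supercritical
    (abar bbar r : ℝ) (habar : 0 < abar) (hbbar : 0 < bbar) (hr : 0 ≤ r)
    (a b Q : ℕ → ℝ)
    (ha : ∀ n : ℕ, a n = abar * ((n : ℝ) + 2) ^ r)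
    (hb : ∀ n : ℕ, 1 ≤ n → b n = bbar * ((n : ℝ) + 2) ^ r)
    (hQ0 : Q 0 = 1)
    (hQ : ∀ n : ℕ, 1 ≤ n → Q n = ∏ i ∈ Finset.range n, a i / b (i + 1))
    (c : ℝ) (hc : bbar / abar < c)
    (q : ℕ → ℝ) (hqnonneg : ∀ n : ℕ, 0 ≤ q n) (hqsum : Summable q)
    (hrec : ∀ n : ℕ, a n * c * q n = b (n + 1) * q (n + 1)) :
    ∀ n : ℕ, q n = 0 := by
  by_contra h
  push_neg at h
  obtain ⟨m, hm⟩ := h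
  have hqm : 0 < q m := lt_of_le_of_ne (hqnonneg m) (Ne.symm hm)
  have hc0 : 0 < c := lt_trans (div_pos hbbar habar) hc
  have hρ : 1 < abar * c / bbar := by
    rw [lt_div_iff₀ hbbar]
    rw [div_lt_iff₀ habar] at hc
    linarith
  -- step formula
  have hstep : ∀ n : ℕ, q (n + 1) =
      (abar * c / bbar) * (((n : ℝ) + 2) / ((n : ℝ) + 3)) ^ r * q n := by
    intro n
    have h1 := hrec n
    rw [ha n, hb (n + 1) (Nat.le_add_left 1 n)] at h1
    have h2 : ((n + 1 : ℕ) : ℝ) + 2 = (n : ℝ) + 3 := by push_cast; ring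
    rw [h2] at h1
    have hp2 : (0 : ℝ) < (n : ℝ) + 2 := by positivity
    have hp3 : (0 : ℝ) < (n : ℝ) + 3 := by positivity
    have hr2 : (0 : ℝ) < ((n : ℝ) + 2) ^ r := Real.rpow_pos_of_pos hp2 r
    have hr3 : (0 : ℝ) < ((n : ℝ) + 3) ^ r := Real.rpow_pos_of_pos hp3 r
    rw [Real.div_rpow hp2.le hp3.le]
    rw [eq_comm]
    field_simp
    linarith [h1]
  -- positivity for n ≥ m
  have hpos : ∀ n, m ≤ n → 0 < q n := by
    intro n hn
    induction n, hn using Nat.le_induction with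
    | base => exact hqm
    | succ k hk ih =>
      rw [hstep k]
      have hp : (0 : ℝ) < (((k : ℝ) + 2) / ((k : ℝ) + 3)) ^ r :=
        Real.rpow_pos_of_pos (by positivity) r
      positivity
  -- eventually ratio ≥ 1
  have htend1 : Filter.Tendsto (fun n : ℕ => ((n : ℝ) + 2) / ((n : ℝ) + 3))
      Filter.atTop (nhds 1) := by
    have h3 : Filter.Tendsto (fun n : ℕ => ((n : ℝ) + 3)) Filter.atTop Filter.atTop :=
      Filter.tendsto_atTop_add_const_right _ 3 tendsto_natCast_atTop_atTop
    have hinv : Filter.Tendsto (fun n : ℕ => ((n : ℝ) + 3)⁻¹) Filter.atTop (nhds 0) :=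
      h3.inv_tendsto_atTop
    have heq : (fun n : ℕ => ((n : ℝ) + 2) / ((n : ℝ) + 3)) =
        fun n : ℕ => 1 - ((n : ℝ) + 3)⁻¹ := by
      funext n
      have hp3 : ((n : ℝ) + 3) ≠ 0 := by positivity
      field_simp; ring
    rw [heq]
    have := (tendsto_const_nhds (x := (1 : ℝ)) (f := Filter.atTop (α := ℕ))).sub hinv
    simpa using this
  have htend2 : Filter.Tendsto
      (fun n : ℕ => (abar * c / bbar) * (((n : ℝ) + 2) / ((n : ℝ) + 3)) ^ r)
      Filter.atTop (nhds (abar * c / bbar)) := by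
    have hrpow := htend1.rpow_const (p := r) (Or.inr hr)
    rw [Real.one_rpow] at hrpow
    have := hrpow.const_mul (abar * c / bbar)
    simpa using this
  have hev : ∀ᶠ n : ℕ in Filter.atTop,
      1 ≤ (abar * c / bbar) * (((n : ℝ) + 2) / ((n : ℝ) + 3)) ^ r :=
    htend2.eventually (Filter.eventually_of_mem (lt_mem_nhds hρ) fun x hx => hx.le)
  obtain ⟨N, hN⟩ := Filter.eventually_atTop.mp hev
  set M := max m N with hM
  have hqM : 0 < q M := hpos M (le_max_left _ _)
  have hmono : ∀ n, M ≤ n → q M ≤ q n := by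
    intro n hn
    induction n, hn using Nat.le_induction with
    | base => exact le_refl _
    | succ k hk ih =>
      have h1 : 1 ≤ (abar * c / bbar) * (((k : ℝ) + 2) / ((k : ℝ) + 3)) ^ r :=
        hN k (le_trans (le_max_right _ _) hk)
      have hqk : 0 < q k := hpos k (le_trans (le_max_left _ _) hk)
      rw [hstep k]
      nlinarith
  have hzero := hqsum.tendsto_atTop_zero
  have hev2 : ∀ᶠ n : ℕ in Filter.atTop, q n < q M :=
    hzero.eventually (Filter.eventually_of_mem (gt_mem_nhds hqM) fun x hx => hx)
  obtain ⟨K, hK⟩ := Filter.eventually_atTop.mp hev2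
  have hlt := hK (max M K) (le_max_right _ _)
  have hge := hmono (max M K) (le_max_left _ _)
  linarith
end

section
/- Let π be a Borel probability measure on ℓ¹ concentrated on the cone of nonnegative sequences, i.e. π({q : q_n ≥ 0 for all n}) = 1. Let N ≥ 1 be an integer, let V̄ : ℝ^N → ℝ be continuous, and set V(q) = V̄(q_0,…,q_{N−1}) for q ∈ ℓ¹. Assume that for every integer M ≥ N and every continuously differentiable compactly supported function F : ℝ^M → ℝ one has ∫_{ℓ¹} F(q_0,…,q_{M−1})·V(q) dπ(q) = 0. Then π({q : V(q) ≠ 0}) = 0, i.e. π is supported on the zero set of V. -/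
open MeasureTheory Manifold

/-- The Banach space `ℓ¹` of real summable sequences indexed by `ℕ`. -/
noncomputable abbrev EllOne : Type := lp (fun _ : ℕ => ℝ) 1

noncomputable instance : MeasurableSpace EllOne := borel _
noncomputable instance : BorelSpace EllOne := ⟨rfl⟩

/-- The `n`-th coordinate of an element of `ℓ¹`. -/
noncomputable def coords (q : EllOne) : ℕ → ℝ := fun n => q n

lemma coords_continuous (n : ℕ) : Continuous fun q : EllOne => coords q n := by
  apply LipschitzWith.continuous (K := 1)
  apply LipschitzWith.of_dist_le_mul
  intro q q'
  have h := lp.norm_apply_le_norm (E := fun _ : ℕ => ℝ) (p := 1) one_ne_zero (q - q') n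
  simpa [coords, dist_eq_norm, lp.coeFn_sub, Pi.sub_apply] using h

/-- Key finite-dimensional lemma: if integrating against all `C¹` compactly supported
functions annihilates `W`, then `{W > 0}` is null. -/
lemma aux_pos {n : ℕ} (ν : Measure (Fin n → ℝ)) [IsFiniteMeasure ν]
    (W : (Fin n → ℝ) → ℝ) (hW : Continuous W)
    (h : ∀ F : (Fin n → ℝ) → ℝ, ContDiff ℝ 1 F → HasCompactSupport F →
      ∫ x, F x * W x ∂ν = 0) :
    ν {x | 0 < W x} = 0 := by
  set U : Set (Fin n → ℝ) := {x | 0 < W x} with hU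
  have hUopen : IsOpen U := isOpen_lt continuous_const hW
  have key : ∀ K : Set (Fin n → ℝ), K ⊆ U → IsCompact K → ν K = 0 := by
    intro K hKU hK
    -- enclose K in a ball
    obtain ⟨r, hr⟩ := hK.isBounded.subset_closedBall 0
    set U' : Set (Fin n → ℝ) := U ∩ Metric.ball 0 (r + 1) with hU'
    have hU'open : IsOpen U' := hUopen.inter Metric.isOpen_ball
    have hKU' : K ⊆ U' := fun x hx => ⟨hKU hx,
      Metric.closedBall_subset_ball (by linarith) (hr hx)⟩
    -- smooth Urysohn function
    obtain ⟨f, hf0, hf1, hf01⟩ :=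
      exists_contMDiffMap_zero_one_of_isClosed (𝓘(ℝ, Fin n → ℝ)) (hU'open.isClosed_compl)
        hK.isClosed (Set.disjoint_left.2 fun x hx hxK => hx (hKU' hxK))
    set F : (Fin n → ℝ) → ℝ := ⇑f with hF
    have hFsupp : Function.support F ⊆ U' := by
      intro x hx
      by_contra hxc
      exact hx (hf0 hxc)
    have hFcd : ContDiff ℝ 1 F := (f.contMDiff.contDiff).of_le (by exact_mod_cast le_top)
    have hFcs : HasCompactSupport F := by
      apply IsCompact.of_isClosed_subset (isCompact_closedBall (0 : Fin n → ℝ) (r + 1))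
        (isClosed_tsupport F)
      apply closure_minimal _ Metric.isClosed_closedBall
      exact hFsupp.trans (Set.inter_subset_right.trans Metric.ball_subset_closedBall)
    have hnonneg : ∀ x, 0 ≤ F x * W x := by
      intro x
      by_cases hx : F x = 0
      · simp [hx]
      · have hxU : x ∈ U' := hFsupp hx
        exact mul_nonneg (hf01 x).1 (le_of_lt hxU.1)
    have hcont : Continuous fun x => F x * W x := (f.contMDiff.contDiff.continuous).mul hW
    have hint : Integrable (fun x => F x * W x) ν :=
      hcont.integrable_of_hasCompactSupport (hFcs.mul_right)
    have hzero : ∫ x, F x * W x ∂ν = 0 := h F hFcd hFcs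
    have hae : (fun x => F x * W x) =ᵐ[ν] 0 :=
      (integral_eq_zero_iff_of_nonneg hnonneg hint).1 hzero
    have hnull : ν {x | ¬ F x * W x = 0} = 0 := ae_iff.1 hae
    apply measure_mono_null _ hnull
    intro x hx
    have h1 : F x = 1 := hf1 hx
    have h2 : 0 < W x := hKU hx
    simp only [Set.mem_setOf_eq, h1, one_mul]
    exact ne_of_gt h2
  rw [hUopen.measure_eq_iSup_isCompact]
  simp only [ENNReal.iSup_eq_zero]
  intro K
  by_cases hKU : K ⊆ U
  · by_cases hK : IsCompact K
    · simp [hKU, hK, key K hKU hK]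
    · simp [hK]
  · simp [hKU]

theorem measure_supported_on_zero_set
    (π : Measure EllOne) [IsProbabilityMeasure π]
    (hπpos : π {q : EllOne | ∀ n : ℕ, 0 ≤ coords q n} = 1)
    (N : ℕ) (hN : 1 ≤ N)
    (Vbar : (Fin N → ℝ) → ℝ) (hVbar : Continuous Vbar)
    (hzero : ∀ M : ℕ, N ≤ M → ∀ F : (Fin M → ℝ) → ℝ,
      ContDiff ℝ 1 F → HasCompactSupport F →
      ∫ q, F (fun i : Fin M => coords q (i : ℕ)) *
          Vbar (fun i : Fin N => coords q (i : ℕ)) ∂π = 0) :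
    π {q : EllOne | Vbar (fun i : Fin N => coords q (i : ℕ)) ≠ 0} = 0 := by
  set P : EllOne → (Fin N → ℝ) := fun q i => coords q (i : ℕ) with hP
  have hPcont : Continuous P := continuous_pi fun i => coords_continuous (i : ℕ)
  have hPm : Measurable P := hPcont.measurable
  set ν : Measure (Fin N → ℝ) := π.map P with hν
  haveI : IsProbabilityMeasure ν := Measure.isProbabilityMeasure_map hPm.aemeasurable
  have hkey : ∀ F : (Fin N → ℝ) → ℝ, ContDiff ℝ 1 F → HasCompactSupport F →
      ∫ x, F x * Vbar x ∂ν = 0 := by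
    intro F hFcd hFcs
    rw [hν, integral_map (f := fun x => F x * Vbar x) hPm.aemeasurable
      ((hFcd.continuous.mul hVbar).aestronglyMeasurable)]
    exact hzero N le_rfl F hFcd hFcs
  have hpos : ν {x | 0 < Vbar x} = 0 := aux_pos ν Vbar hVbar hkey
  have hneg : ν {x | 0 < -Vbar x} = 0 := by
    apply aux_pos ν (fun x => -Vbar x) hVbar.neg
    intro F hFcd hFcs
    have := hkey F hFcd hFcs
    rw [← neg_eq_zero, ← integral_neg] at this
    simpa [mul_neg] using this
  have hunion : ν {x | Vbar x ≠ 0} = 0 := by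
    refine measure_mono_null ?_ (measure_union_null hpos hneg)
    intro x hx
    rcases lt_or_gt_of_ne (hx : Vbar x ≠ 0) with h | h
    · exact Or.inr (by simp only [Set.mem_setOf_eq]; linarith)
    · exact Or.inl h
  have hset : {q : EllOne | Vbar (fun i : Fin N => coords q (i : ℕ)) ≠ 0}
      = P ⁻¹' {x | Vbar x ≠ 0} := rfl
  rw [hset, ← Measure.map_apply hPm]
  · exact hunion
  · exact ((isOpen_ne_fun hVbar continuous_const).measurableSet)
end

section
/- Let c be a real number with c > b̄/ā and let π be a Borel probability measure on ℓ¹ concentrated on the cone of nonnegative sequences with ∫_{ℓ¹} ‖q‖_{ℓ¹} dπ(q) < ∞. Assume that for every integer N ≥ 1 and every function G ∈ C²(ℝ^N) with G(0) = 0 whose partial derivatives ∂_0 G, …, ∂_{N−1} G are each continuously differentiable with compact support, one has ∫_{ℓ¹} ∑_{n=0}^{N−1} ∂_n G(q_0,…,q_{N−1})·(J_{n−1}(q) − J_n(q)) dπ(q) = 0. Then π is the Dirac measure at the zero sequence of ℓ¹. -/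
open MeasureTheory Filter

/-- The Becker–Döring flux `J_n(q) = a_n · c · q_n − b_{n+1} · q_{n+1}`,
with `a_n = ā (n+2)^r` and `b_n = b̄ (n+2)^r`. -/
noncomputable def fluxJ (abar bbar r c : ℝ) (q : ℕ → ℝ) (n : ℕ) : ℝ :=
  abar * ((n : ℝ) + 2) ^ r * c * q n - bbar * ((n : ℝ) + 3) ^ r * q (n + 1)

/-- `J_{n-1}`, with the convention `J_{-1} = 0`. -/
noncomputable def fluxJprev (abar bbar r c : ℝ) (q : ℕ → ℝ) : ℕ → ℝ
  | 0 => 0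
  | n + 1 => fluxJ abar bbar r c q n


noncomputable def bump : ContDiffBump (0:ℝ) := ⟨1, 2, one_pos, one_lt_two⟩
noncomputable def chi : ℝ → ℝ := bump

lemma chi_contDiff : ContDiff ℝ (↑(⊤:ℕ∞)) chi := bump.contDiff
lemma chi_nonneg (t : ℝ) : 0 ≤ chi t := bump.nonneg
lemma chi_le_one (t : ℝ) : chi t ≤ 1 := bump.le_one
lemma chi_one {t : ℝ} (ht : |t| ≤ 1) : chi t = 1 := by
  apply bump.one_of_mem_closedBall
  simpa [Metric.closedBall, Real.dist_eq, bump] using ht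
lemma chi_zero {t : ℝ} (ht : 2 ≤ |t|) : chi t = 0 := by
  have : t ∉ Function.support (bump : ℝ → ℝ) := by
    rw [ContDiffBump.support_eq]
    simp only [Metric.mem_ball, Real.dist_eq, sub_zero, not_lt]
    simpa [bump] using ht
  simpa [chi] using Function.notMem_support.mp this

lemma chi_deriv_zero_of_lt {t : ℝ} (ht : |t| < 1) : deriv chi t = 0 := by
  have h : chi =ᶠ[nhds t] (fun _ => (1:ℝ)) := by
    have ho : IsOpen {s : ℝ | |s| < 1} := isOpen_lt (by continuity) continuous_const
    filter_upwards [ho.mem_nhds ht] with s hs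
    exact chi_one hs.le
  rw [h.deriv_eq, deriv_const]

lemma chi_deriv_zero_of_gt {t : ℝ} (ht : 2 < |t|) : deriv chi t = 0 := by
  have h : chi =ᶠ[nhds t] (fun _ => (0:ℝ)) := by
    have ho : IsOpen {s : ℝ | 2 < |s|} := isOpen_lt continuous_const (by continuity)
    filter_upwards [ho.mem_nhds ht] with s hs
    exact chi_zero hs.le
  rw [h.deriv_eq, deriv_const]

lemma chi_deriv_contDiff : ContDiff ℝ (↑(⊤:ℕ∞)) (deriv chi) :=
  (contDiff_infty_iff_deriv.mp chi_contDiff).2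

lemma chi_exists_bound : ∃ x : ℝ, ∀ y : ℝ, |deriv chi y| ≤ |deriv chi x| :=
  Continuous.exists_forall_ge_of_hasCompactSupport
    (continuous_abs.comp (chi_deriv_contDiff.continuous))
    ((bump.hasCompactSupport).deriv.abs)

noncomputable def Cchi : ℝ := |deriv chi chi_exists_bound.choose|

lemma Cchi_bound (t : ℝ) : |deriv chi t| ≤ Cchi := chi_exists_bound.choose_spec t

lemma Cchi_nonneg : 0 ≤ Cchi := le_trans (abs_nonneg _) (Cchi_bound 5)

lemma chi_deriv_mul_le {t : ℝ} (ht : 0 ≤ t) : |deriv chi t| * t ≤ 2 * Cchi := by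
  rcases le_or_gt t 2 with h | h
  · calc |deriv chi t| * t ≤ Cchi * 2 := by
          apply mul_le_mul (Cchi_bound t) h ht Cchi_nonneg
        _ = 2 * Cchi := mul_comm _ _
  · rw [chi_deriv_zero_of_gt (by rwa [abs_of_nonneg ht])]
    simp [mul_nonneg two_pos.le Cchi_nonneg]


section Test
variable {N : ℕ}

noncomputable def Sq (x : Fin N → ℝ) : ℝ := ∑ j, x j ^ 2

noncomputable def Gtest (k : Fin N) (M : ℝ) (x : Fin N → ℝ) : ℝ :=
  x k * chi ((M ^ 2)⁻¹ * Sq x)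

noncomputable def gradFn (k n : Fin N) (M : ℝ) (x : Fin N → ℝ) : ℝ :=
  x k * (deriv chi ((M ^ 2)⁻¹ * Sq x) * ((M ^ 2)⁻¹ * (2 * x n))) +
    chi ((M ^ 2)⁻¹ * Sq x) * (if k = n then 1 else 0)

lemma Sq_nonneg (x : Fin N → ℝ) : 0 ≤ Sq x :=
  Finset.sum_nonneg fun j _ => sq_nonneg _

lemma sq_le_Sq (x : Fin N → ℝ) (j : Fin N) : x j ^ 2 ≤ Sq x :=
  Finset.single_le_sum (fun i _ => sq_nonneg (x i)) (Finset.mem_univ j)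

lemma abs_le_sqrt_Sq (x : Fin N → ℝ) (j : Fin N) : |x j| ≤ Real.sqrt (Sq x) := by
  rw [← Real.sqrt_sq_eq_abs]
  exact Real.sqrt_le_sqrt (sq_le_Sq x j)

lemma hasFDerivAt_Gtest (k : Fin N) (M : ℝ) (x : Fin N → ℝ) :
    HasFDerivAt (Gtest k M)
      ((x k) • ((deriv chi ((M ^ 2)⁻¹ * Sq x)) •
          ((M ^ 2)⁻¹ • (∑ j : Fin N, (2 * x j) • (ContinuousLinearMap.proj j : (Fin N → ℝ) →L[ℝ] ℝ)))) +
        (chi ((M ^ 2)⁻¹ * Sq x)) • (ContinuousLinearMap.proj k : (Fin N → ℝ) →L[ℝ] ℝ)) x := by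
  have hproj : ∀ j : Fin N, HasFDerivAt (fun x : Fin N → ℝ => x j)
      (ContinuousLinearMap.proj j : (Fin N → ℝ) →L[ℝ] ℝ) x :=
    fun j => (ContinuousLinearMap.proj j : (Fin N → ℝ) →L[ℝ] ℝ).hasFDerivAt
  have hSq : HasFDerivAt Sq (∑ j : Fin N, (2 * x j) • (ContinuousLinearMap.proj j : (Fin N → ℝ) →L[ℝ] ℝ)) x := by
    apply HasFDerivAt.fun_sum
    intro j _
    have := (hasDerivAt_pow 2 (x j)).comp_hasFDerivAt x (hproj j)
    simpa [Function.comp_def] using this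
  have hu : HasFDerivAt (fun x : Fin N → ℝ => (M ^ 2)⁻¹ * Sq x)
      ((M ^ 2)⁻¹ • (∑ j : Fin N, (2 * x j) • (ContinuousLinearMap.proj j : (Fin N → ℝ) →L[ℝ] ℝ))) x :=
    hSq.const_mul _
  have hchi : HasDerivAt chi (deriv chi ((M ^ 2)⁻¹ * Sq x)) ((M ^ 2)⁻¹ * Sq x) :=
    ((chi_contDiff.differentiable (by simp)) _).hasDerivAt
  exact (hproj k).mul (hchi.comp_hasFDerivAt x hu)

lemma fderiv_Gtest (k n : Fin N) (M : ℝ) (x : Fin N → ℝ) :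
    fderiv ℝ (Gtest k M) x (Pi.single n 1) = gradFn k n M x := by
  rw [(hasFDerivAt_Gtest k M x).fderiv]
  simp only [ContinuousLinearMap.add_apply, ContinuousLinearMap.smul_apply,
    ContinuousLinearMap.sum_apply, ContinuousLinearMap.proj_apply, smul_eq_mul, gradFn]
  congr 2
  · rw [Finset.sum_eq_single n]
    · simp
    · intro j _ hj; simp [Pi.single_apply, hj.symm]
    · simp
  · simp [Pi.single_apply]

lemma Sq_contDiff : ContDiff ℝ (↑(⊤:ℕ∞)) (Sq : (Fin N → ℝ) → ℝ) := by
  apply ContDiff.sum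
  intro j _
  exact ((ContinuousLinearMap.proj j : (Fin N → ℝ) →L[ℝ] ℝ).contDiff).pow 2

lemma u_contDiff (M : ℝ) : ContDiff ℝ (↑(⊤:ℕ∞)) (fun x : Fin N → ℝ => (M ^ 2)⁻¹ * Sq x) :=
  contDiff_const.mul Sq_contDiff

lemma Gtest_contDiff (k : Fin N) (M : ℝ) : ContDiff ℝ 2 (Gtest k M) := by
  apply ContDiff.of_le (n := ↑(⊤:ℕ∞))
  · exact ((ContinuousLinearMap.proj k : (Fin N → ℝ) →L[ℝ] ℝ).contDiff).mul
      (chi_contDiff.comp (u_contDiff M))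
  · decide

lemma Gtest_zero (k : Fin N) (M : ℝ) : Gtest k M 0 = 0 := by
  simp [Gtest]

lemma gradFn_contDiff (k n : Fin N) (M : ℝ) : ContDiff ℝ 1 (gradFn k n M) := by
  apply ContDiff.of_le (n := ↑(⊤:ℕ∞))
  · apply ContDiff.add
    · exact ((ContinuousLinearMap.proj k : (Fin N → ℝ) →L[ℝ] ℝ).contDiff).mul
        (((chi_deriv_contDiff.comp (u_contDiff M))).mul
          (contDiff_const.mul (contDiff_const.mul
            ((ContinuousLinearMap.proj n : (Fin N → ℝ) →L[ℝ] ℝ).contDiff))))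
    · exact (chi_contDiff.comp (u_contDiff M)).mul contDiff_const
  · decide

lemma gradFn_zero_of_big (k n : Fin N) {M : ℝ} (hM : 1 ≤ M) {x : Fin N → ℝ}
    (hx : 2 * M ^ 2 < Sq x) : gradFn k n M x = 0 := by
  have hM2 : (0:ℝ) < M ^ 2 := by positivity
  have hu : 2 < (M ^ 2)⁻¹ * Sq x := by
    have h := mul_lt_mul_of_pos_left hx (by positivity : (0:ℝ) < (M ^ 2)⁻¹)
    rwa [show (M ^ 2)⁻¹ * (2 * M ^ 2) = 2 by field_simp] at h
  have hnn : (0:ℝ) ≤ (M ^ 2)⁻¹ * Sq x := mul_nonneg (by positivity) (Sq_nonneg x)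
  have h1 : chi ((M ^ 2)⁻¹ * Sq x) = 0 := chi_zero (by rw [abs_of_nonneg hnn]; exact hu.le)
  have h2 : deriv chi ((M ^ 2)⁻¹ * Sq x) = 0 := chi_deriv_zero_of_gt (by rwa [abs_of_nonneg hnn])
  simp [gradFn, h1, h2]

lemma gradFn_hasCompactSupport (k n : Fin N) {M : ℝ} (hM : 1 ≤ M) :
    HasCompactSupport (gradFn k n M) := by
  apply HasCompactSupport.intro (isCompact_closedBall (0 : Fin N → ℝ) (2 * M))
  intro x hx
  apply gradFn_zero_of_big k n hM
  simp only [Metric.mem_closedBall, dist_zero_right, not_le] at hx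
  have : ¬ (‖x‖ ≤ 2 * M) := not_le.mpr hx
  rw [pi_norm_le_iff_of_nonneg (by positivity)] at this
  push_neg at this
  obtain ⟨j, hj⟩ := this
  rw [Real.norm_eq_abs] at hj
  have h1 : (2*M)^2 < x j ^ 2 := by
    have h0 : (0:ℝ) < 2 * M := by positivity
    have := mul_lt_mul'' hj hj h0.le h0.le
    nlinarith [sq_abs (x j)]
  have := sq_le_Sq x j
  nlinarith

lemma gradFn_bound (k n : Fin N) {M : ℝ} (hM : 1 ≤ M) (x : Fin N → ℝ) :
    |gradFn k n M x| ≤ 1 + 4 * Cchi := by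
  have hM2 : (0:ℝ) < M ^ 2 := by positivity
  set u := (M ^ 2)⁻¹ * Sq x with hu
  have hu0 : 0 ≤ u := by rw [hu]; exact mul_nonneg (by positivity) (Sq_nonneg x)
  have habs : |x k| * |x n| ≤ Sq x := by
    calc |x k| * |x n| ≤ Real.sqrt (Sq x) * Real.sqrt (Sq x) :=
          mul_le_mul (abs_le_sqrt_Sq x k) (abs_le_sqrt_Sq x n) (abs_nonneg _) (Real.sqrt_nonneg _)
      _ = Sq x := Real.mul_self_sqrt (Sq_nonneg x)
  have h2 : |x k * (deriv chi u * ((M ^ 2)⁻¹ * (2 * x n)))| ≤ 4 * Cchi := by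
    have : |x k * (deriv chi u * ((M ^ 2)⁻¹ * (2 * x n)))|
        = (|x k| * |x n|) * ((M ^ 2)⁻¹ * 2) * |deriv chi u| := by
      rw [abs_mul, abs_mul, abs_mul, abs_mul]
      rw [abs_of_nonneg (by positivity : (0:ℝ) ≤ (M^2)⁻¹), abs_of_nonneg (by norm_num : (0:ℝ) ≤ (2:ℝ))]
      ring
    rw [this]
    calc (|x k| * |x n|) * ((M ^ 2)⁻¹ * 2) * |deriv chi u|
        ≤ Sq x * ((M ^ 2)⁻¹ * 2) * |deriv chi u| := by
          apply mul_le_mul_of_nonneg_right _ (abs_nonneg _)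
          apply mul_le_mul_of_nonneg_right habs (by positivity)
      _ = 2 * (|deriv chi u| * u) := by rw [hu]; ring
      _ ≤ 2 * (2 * Cchi) := by
          apply mul_le_mul_of_nonneg_left (chi_deriv_mul_le hu0) (by norm_num)
      _ = 4 * Cchi := by ring
  have h1 : |chi u * (if k = n then (1:ℝ) else 0)| ≤ 1 := by
    rw [abs_mul]
    apply mul_le_one₀
    · rw [abs_of_nonneg (chi_nonneg u)]; exact chi_le_one u
    · exact abs_nonneg _
    · split <;> simp
  calc |gradFn k n M x| ≤ _ + _ := abs_add_le _ _
    _ ≤ 4 * Cchi + 1 := add_le_add h2 h1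
    _ = 1 + 4 * Cchi := by ring

lemma gradFn_eq_of_small (k n : Fin N) {M : ℝ} (hM : 1 ≤ M) {x : Fin N → ℝ}
    (hx : Sq x < M ^ 2) : gradFn k n M x = if k = n then 1 else 0 := by
  have hM2 : (0:ℝ) < M ^ 2 := by positivity
  have hu : (M ^ 2)⁻¹ * Sq x < 1 := by
    rw [← inv_mul_cancel₀ hM2.ne']
    exact mul_lt_mul_of_pos_left hx (by positivity)
  have habs : |(M ^ 2)⁻¹ * Sq x| < 1 := by
    rw [abs_of_nonneg (mul_nonneg (by positivity) (Sq_nonneg x))]; exact hu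
  have h1 : chi ((M ^ 2)⁻¹ * Sq x) = 1 := chi_one habs.le
  have h2 : deriv chi ((M ^ 2)⁻¹ * Sq x) = 0 := chi_deriv_zero_of_lt habs
  simp [gradFn, h1, h2]

end Test
section EllOneAux

lemma coords_dist_le (p q : EllOne) (n : ℕ) : |coords p n - coords q n| ≤ dist p q := by
  rw [dist_eq_norm]
  have h := lp.norm_apply_le_norm (p := (1:ENNReal)) one_ne_zero (p - q) n
  rw [lp.coeFn_sub] at h
  simpa [coords, Real.norm_eq_abs] using h

lemma continuous_coords (n : ℕ) : Continuous (fun q : EllOne => coords q n) := by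
  apply Metric.continuous_iff.mpr
  intro q ε hε
  exact ⟨ε, hε, fun p hp => lt_of_le_of_lt (by simpa [Real.dist_eq] using coords_dist_le p q n) hp⟩

lemma abs_coords_le (q : EllOne) (n : ℕ) : |coords q n| ≤ ‖q‖ := by
  simpa [coords, Real.norm_eq_abs] using lp.norm_apply_le_norm (p := (1:ENNReal)) one_ne_zero q n

lemma continuous_fluxJ (abar bbar r c : ℝ) (n : ℕ) :
    Continuous (fun q : EllOne => fluxJ abar bbar r c (coords q) n) := by
  unfold fluxJ
  exact (continuous_const.mul (continuous_coords n)).sub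
    (continuous_const.mul (continuous_coords (n+1)))

lemma continuous_fluxJprev (abar bbar r c : ℝ) (n : ℕ) :
    Continuous (fun q : EllOne => fluxJprev abar bbar r c (coords q) n) := by
  cases n with
  | zero => simpa [fluxJprev] using continuous_const
  | succ j => simpa [fluxJprev] using continuous_fluxJ abar bbar r c j

noncomputable def KJ (abar bbar r c : ℝ) (n : ℕ) : ℝ :=
  abar * ((n : ℝ) + 2) ^ r * |c| + bbar * ((n : ℝ) + 3) ^ r

lemma KJ_nonneg {abar bbar : ℝ} (ha : 0 < abar) (hb : 0 < bbar) (r c : ℝ) (n : ℕ) :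
    0 ≤ KJ abar bbar r c n := by
  unfold KJ
  have h2 : (0:ℝ) < ((n:ℝ)+2) ^ r := Real.rpow_pos_of_pos (by positivity) r
  have h3 : (0:ℝ) < ((n:ℝ)+3) ^ r := Real.rpow_pos_of_pos (by positivity) r
  positivity

lemma fluxJ_abs_le {abar bbar : ℝ} (ha : 0 < abar) (hb : 0 < bbar) (r c : ℝ)
    (q : EllOne) (n : ℕ) :
    |fluxJ abar bbar r c (coords q) n| ≤ KJ abar bbar r c n * ‖q‖ := by
  unfold fluxJ KJ
  have h2 : (0:ℝ) < ((n:ℝ)+2) ^ r := Real.rpow_pos_of_pos (by positivity) r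
  have h3 : (0:ℝ) < ((n:ℝ)+3) ^ r := Real.rpow_pos_of_pos (by positivity) r
  calc |abar * ((n : ℝ) + 2) ^ r * c * coords q n - bbar * ((n : ℝ) + 3) ^ r * coords q (n + 1)|
      ≤ |abar * ((n : ℝ) + 2) ^ r * c * coords q n| + |bbar * ((n : ℝ) + 3) ^ r * coords q (n + 1)| :=
        abs_sub _ _
    _ ≤ abar * ((n : ℝ) + 2) ^ r * |c| * ‖q‖ + bbar * ((n : ℝ) + 3) ^ r * ‖q‖ := by
        apply add_le_add
        · rw [abs_mul, abs_mul, abs_mul, abs_of_nonneg ha.le, abs_of_nonneg h2.le]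
          exact mul_le_mul_of_nonneg_left (abs_coords_le q n) (by positivity)
        · rw [abs_mul, abs_mul, abs_of_nonneg hb.le, abs_of_nonneg h3.le]
          exact mul_le_mul_of_nonneg_left (abs_coords_le q (n+1)) (by positivity)
    _ = (abar * ((n : ℝ) + 2) ^ r * |c| + bbar * ((n : ℝ) + 3) ^ r) * ‖q‖ := by ring

noncomputable def KJP (abar bbar r c : ℝ) : ℕ → ℝ
  | 0 => 0
  | n + 1 => KJ abar bbar r c n

lemma KJP_nonneg {abar bbar : ℝ} (ha : 0 < abar) (hb : 0 < bbar) (r c : ℝ) (n : ℕ) :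
    0 ≤ KJP abar bbar r c n := by
  cases n with
  | zero => simp [KJP]
  | succ j => simpa [KJP] using KJ_nonneg ha hb r c j

lemma fluxJprev_abs_le {abar bbar : ℝ} (ha : 0 < abar) (hb : 0 < bbar) (r c : ℝ)
    (q : EllOne) (n : ℕ) :
    |fluxJprev abar bbar r c (coords q) n| ≤ KJP abar bbar r c n * ‖q‖ := by
  cases n with
  | zero => simp [fluxJprev, KJP]
  | succ j => simpa [fluxJprev, KJP] using fluxJ_abs_le ha hb r c q j

end EllOneAux
theorem stationary_measure_is_dirac_supercritical
    (abar bbar r : ℝ) (habar : 0 < abar) (hbbar : 0 < bbar) (hr : 0 ≤ r)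
    (c : ℝ) (hc : bbar / abar < c)
    (π : Measure EllOne) [IsProbabilityMeasure π]
    (hπpos : π {q : EllOne | ∀ n : ℕ, 0 ≤ coords q n} = 1)
    (hπmom : (∫⁻ q : EllOne, (‖q‖₊ : ENNReal) ∂π) ≠ ⊤)
    (hstat : ∀ N : ℕ, 1 ≤ N → ∀ G : (Fin N → ℝ) → ℝ,
      ContDiff ℝ 2 G → G 0 = 0 →
      (∀ n : Fin N,
        ContDiff ℝ 1 (fun x : Fin N → ℝ => fderiv ℝ G x (Pi.single n 1)) ∧
        HasCompactSupport (fun x : Fin N → ℝ => fderiv ℝ G x (Pi.single n 1))) →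
      ∫ q, (∑ n : Fin N,
          fderiv ℝ G (fun i : Fin N => coords q (i : ℕ)) (Pi.single n 1) *
            (fluxJprev abar bbar r c (coords q) (n : ℕ) -
              fluxJ abar bbar r c (coords q) (n : ℕ))) ∂π = 0) :
    π = Measure.dirac (0 : EllOne) := by
  classical
  have hc0 : 0 < c := lt_trans (div_pos hbbar habar) hc
  -- integrability of the norm
  have hnormint : Integrable (fun q : EllOne => ‖q‖) π := by
    refine ⟨continuous_norm.aestronglyMeasurable, ?_⟩
    rw [HasFiniteIntegral]
    have heq : ∀ q : EllOne, (‖(‖q‖)‖₊ : ENNReal) = (‖q‖₊ : ENNReal) := fun q => by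
      simp [nnnorm_norm]
    calc ∫⁻ q, (‖(‖q‖)‖₊ : ENNReal) ∂π = ∫⁻ q, (‖q‖₊ : ENNReal) ∂π := by
          exact lintegral_congr heq
      _ < ⊤ := lt_top_iff_ne_top.mpr hπmom
  -- integrability of coordinates
  have hcint : ∀ n, Integrable (fun q : EllOne => coords q n) π := by
    intro n
    refine hnormint.mono ((continuous_coords n).aestronglyMeasurable) ?_
    refine Filter.Eventually.of_forall fun q => ?_
    rw [Real.norm_eq_abs, Real.norm_eq_abs, abs_of_nonneg (norm_nonneg q)]
    exact abs_coords_le q n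
  have hJint : ∀ n, Integrable (fun q : EllOne => fluxJ abar bbar r c (coords q) n) π := by
    intro n
    exact ((hcint n).const_mul (abar * ((n:ℝ)+2)^r * c)).sub
      ((hcint (n+1)).const_mul (bbar * ((n:ℝ)+3)^r))
  have hJPint : ∀ n, Integrable (fun q : EllOne => fluxJprev abar bbar r c (coords q) n) π := by
    intro n
    cases n with
    | zero => simpa [fluxJprev] using (integrable_const (0:ℝ) (μ := π))
    | succ j => exact hJint j
  -- a.e. nonnegativity of coordinates
  have haeNonneg : ∀ᵐ q ∂π, ∀ n, 0 ≤ coords q n := by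
    have hms : MeasurableSet {q : EllOne | ∀ n, 0 ≤ coords q n} := by
      rw [Set.setOf_forall]
      exact MeasurableSet.iInter fun n =>
        measurableSet_le measurable_const (continuous_coords n).measurable
    have h0 : π {q : EllOne | ∀ n, 0 ≤ coords q n}ᶜ = 0 := by
      rw [measure_compl hms (measure_ne_top π _), hπpos, measure_univ]
      simp
    rw [ae_iff]
    rw [show {q : EllOne | ¬ ∀ n, 0 ≤ coords q n} = {q : EllOne | ∀ n, 0 ≤ coords q n}ᶜ from rfl]
    exact h0
  -- KEY STEP: the stationarity identity in integrated/limit form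
  have key : ∀ k : ℕ, ∫ q, (fluxJprev abar bbar r c (coords q) k
      - fluxJ abar bbar r c (coords q) k) ∂π = 0 := by
    intro k
    set N := k + 1 with hN
    set kF : Fin N := Fin.last k with hkF
    set Δ : ℕ → EllOne → ℝ := fun n q => fluxJprev abar bbar r c (coords q) n
      - fluxJ abar bbar r c (coords q) n with hΔ
    set F : ℕ → EllOne → ℝ := fun m q => ∑ n : Fin N,
      gradFn kF n ((m:ℝ)+1) (fun i : Fin N => coords q (i:ℕ)) * Δ (n:ℕ) q with hF
    have hM : ∀ m : ℕ, (1:ℝ) ≤ (m:ℝ)+1 := fun m => by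
      have : (0:ℝ) ≤ (m:ℝ) := Nat.cast_nonneg m
      linarith
    have hFzero : ∀ m : ℕ, ∫ q, F m q ∂π = 0 := by
      intro m
      have hside : ∀ n : Fin N,
          ContDiff ℝ 1 (fun x : Fin N → ℝ => fderiv ℝ (Gtest kF ((m:ℝ)+1)) x (Pi.single n 1)) ∧
          HasCompactSupport (fun x : Fin N → ℝ => fderiv ℝ (Gtest kF ((m:ℝ)+1)) x (Pi.single n 1)) := by
        intro n
        have heq : (fun x : Fin N → ℝ => fderiv ℝ (Gtest kF ((m:ℝ)+1)) x (Pi.single n 1))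
            = gradFn kF n ((m:ℝ)+1) := funext fun x => fderiv_Gtest kF n _ x
        rw [heq]
        exact ⟨gradFn_contDiff kF n _, gradFn_hasCompactSupport kF n (hM m)⟩
      have H := hstat N (Nat.le_add_left 1 k) (Gtest kF ((m:ℝ)+1))
        (Gtest_contDiff kF _) (Gtest_zero kF _) hside
      rw [← H]
      congr 1
      funext q
      simp only [hF, fderiv_Gtest, hΔ]
    -- dominated convergence
    set CN : ℝ := (1 + 4*Cchi) * ∑ n : Fin N, (KJP abar bbar r c (n:ℕ) + KJ abar bbar r c (n:ℕ))
      with hCN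
    have hboundint : Integrable (fun q : EllOne => CN * ‖q‖) π := hnormint.const_mul CN
    have hmeas : ∀ m, AEStronglyMeasurable (F m) π := by
      intro m
      apply Continuous.aestronglyMeasurable
      apply continuous_finset_sum
      intro n _
      exact (((gradFn_contDiff kF n _).continuous).comp
          (continuous_pi fun i : Fin N => continuous_coords (i:ℕ))).mul
        ((continuous_fluxJprev abar bbar r c (n:ℕ)).sub (continuous_fluxJ abar bbar r c (n:ℕ)))
    have hbd : ∀ m, ∀ᵐ q ∂π, ‖F m q‖ ≤ CN * ‖q‖ := by
      intro m
      refine Filter.Eventually.of_forall fun q => ?_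
      rw [Real.norm_eq_abs]
      calc |F m q| ≤ ∑ n : Fin N,
            |gradFn kF n ((m:ℝ)+1) (fun i : Fin N => coords q (i:ℕ)) * Δ (n:ℕ) q| :=
          Finset.abs_sum_le_sum_abs _ _
        _ ≤ ∑ n : Fin N, (1 + 4*Cchi) *
              ((KJP abar bbar r c (n:ℕ) + KJ abar bbar r c (n:ℕ)) * ‖q‖) := by
            apply Finset.sum_le_sum
            intro n _
            rw [abs_mul]
            apply mul_le_mul (gradFn_bound kF n (hM m) _) ?_ (abs_nonneg _) (by linarith [Cchi_nonneg])
            rw [hΔ]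
            calc |fluxJprev abar bbar r c (coords q) (n:ℕ) - fluxJ abar bbar r c (coords q) (n:ℕ)|
                ≤ |fluxJprev abar bbar r c (coords q) (n:ℕ)| + |fluxJ abar bbar r c (coords q) (n:ℕ)| :=
                  abs_sub _ _
              _ ≤ KJP abar bbar r c (n:ℕ) * ‖q‖ + KJ abar bbar r c (n:ℕ) * ‖q‖ :=
                  add_le_add (fluxJprev_abs_le habar hbbar r c q _) (fluxJ_abs_le habar hbbar r c q _)
              _ = (KJP abar bbar r c (n:ℕ) + KJ abar bbar r c (n:ℕ)) * ‖q‖ := by ring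
        _ = CN * ‖q‖ := by
            simp only [hCN, mul_assoc, Finset.sum_mul, Finset.mul_sum]
    have hlim : ∀ᵐ q ∂π, Filter.Tendsto (fun m => F m q) atTop (nhds (Δ k q)) := by
      refine Filter.Eventually.of_forall fun q => ?_
      have hev : ∀ᶠ m : ℕ in atTop, F m q = Δ k q := by
        have htend : Filter.Tendsto (fun m : ℕ => (m:ℝ)+1) atTop atTop :=
          Filter.tendsto_atTop_add_const_right _ 1 tendsto_natCast_atTop_atTop
        filter_upwards [htend.eventually_gt_atTop (Sq (fun i : Fin N => coords q (i:ℕ)))] with m hm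
        have hsq : Sq (fun i : Fin N => coords q (i:ℕ)) < ((m:ℝ)+1)^2 := by
          have h1 : (1:ℝ) ≤ (m:ℝ)+1 := hM m
          nlinarith
        have hgrad : ∀ n : Fin N, gradFn kF n ((m:ℝ)+1) (fun i : Fin N => coords q (i:ℕ))
            = if kF = n then 1 else 0 := fun n => gradFn_eq_of_small kF n (hM m) hsq
        show (∑ n : Fin N, gradFn kF n ((m:ℝ)+1) (fun i : Fin N => coords q (i:ℕ)) * Δ (n:ℕ) q)
          = Δ k q
        rw [Finset.sum_congr rfl (fun n _ => by rw [hgrad n])]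
        simp only [ite_mul, one_mul, zero_mul]
        rw [Finset.sum_ite_eq Finset.univ kF (fun n => Δ (n:ℕ) q)]
        simp [hkF, Fin.val_last]
      exact Filter.Tendsto.congr' (Filter.EventuallyEq.symm hev) tendsto_const_nhds
    have hDCT := tendsto_integral_of_dominated_convergence (μ := π) (F := F)
      (f := Δ k) (fun q => CN * ‖q‖) hmeas hboundint hbd hlim
    have h0 : Filter.Tendsto (fun m => ∫ q, F m q ∂π) atTop (nhds 0) := by
      simp only [hFzero]
      exact tendsto_const_nhds
    exact (tendsto_nhds_unique hDCT h0)
  -- moments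
  set I : ℕ → ℝ := fun n => ∫ q, coords q n ∂π with hI
  have hJval : ∀ n : ℕ, ∫ q, fluxJ abar bbar r c (coords q) n ∂π
      = abar * ((n:ℝ)+2)^r * c * I n - bbar * ((n:ℝ)+3)^r * I (n+1) := by
    intro n
    rw [show (fun q : EllOne => fluxJ abar bbar r c (coords q) n)
        = fun q => (abar * ((n:ℝ)+2)^r * c) * coords q n
            - (bbar * ((n:ℝ)+3)^r) * coords q (n+1) from rfl]
    rw [integral_sub ((hcint n).const_mul _) ((hcint (n+1)).const_mul _),
      integral_const_mul, integral_const_mul]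
  have hJzero : ∀ n : ℕ, ∫ q, fluxJ abar bbar r c (coords q) n ∂π = 0 := by
    intro n
    induction n with
    | zero =>
      have h := key 0
      rw [integral_sub (hJPint 0) (hJint 0)] at h
      have h0 : ∫ q, fluxJprev abar bbar r c (coords q) 0 ∂π = 0 := by
        simp [fluxJprev]
      rw [h0] at h
      linarith
    | succ j ih =>
      have h := key (j+1)
      rw [integral_sub (hJPint (j+1)) (hJint (j+1))] at h
      have h0 : ∫ q, fluxJprev abar bbar r c (coords q) (j+1) ∂π = 0 := by
        rw [show (fun q : EllOne => fluxJprev abar bbar r c (coords q) (j+1))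
          = fun q => fluxJ abar bbar r c (coords q) j from rfl]
        exact ih
      rw [h0] at h
      linarith
  -- positivity of moments
  have hInonneg : ∀ n, 0 ≤ I n := by
    intro n
    apply integral_nonneg_of_ae
    filter_upwards [haeNonneg] with q hq
    exact hq n
  have hIle : ∀ n, I n ≤ ∫ q, ‖q‖ ∂π := by
    intro n
    apply integral_mono (hcint n) hnormint
    intro q
    exact (le_abs_self _).trans (abs_coords_le q n)
  -- recursion : A n * I n = B n * I (n+1)
  have hA : ∀ n : ℕ, (0:ℝ) < abar * ((n:ℝ)+2)^r * c := fun n => by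
    have := Real.rpow_pos_of_pos (show (0:ℝ) < (n:ℝ)+2 by positivity) r
    positivity
  have hB : ∀ n : ℕ, (0:ℝ) < bbar * ((n:ℝ)+3)^r := fun n => by
    have := Real.rpow_pos_of_pos (show (0:ℝ) < (n:ℝ)+3 by positivity) r
    positivity
  have hrec : ∀ n : ℕ, I (n+1) = (abar * ((n:ℝ)+2)^r * c / (bbar * ((n:ℝ)+3)^r)) * I n := by
    intro n
    have h := hJzero n
    rw [hJval n] at h
    field_simp
    linarith
  -- the ratio tends to abar*c/bbar > 1
  set L : ℝ := abar * c / bbar with hL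
  have hL1 : 1 < L := by
    rw [hL, lt_div_iff₀ hbbar, one_mul]
    rw [div_lt_iff₀ habar] at hc
    linarith
  set ratio : ℕ → ℝ := fun n => abar * ((n:ℝ)+2)^r * c / (bbar * ((n:ℝ)+3)^r) with hratio
  have hratiopos : ∀ n, 0 < ratio n := fun n => div_pos (hA n) (hB n)
  have hratiotend : Filter.Tendsto ratio atTop (nhds L) := by
    have hbase : Filter.Tendsto (fun n : ℕ => ((n:ℝ)+2)/((n:ℝ)+3)) atTop (nhds 1) := by
      have h3 : Filter.Tendsto (fun n : ℕ => (n:ℝ)+3) atTop atTop :=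
        Filter.tendsto_atTop_add_const_right _ 3 tendsto_natCast_atTop_atTop
      have hinv : Filter.Tendsto (fun n : ℕ => ((n:ℝ)+3)⁻¹) atTop (nhds 0) :=
        h3.inv_tendsto_atTop
      have heq : ∀ n : ℕ, ((n:ℝ)+2)/((n:ℝ)+3) = 1 - ((n:ℝ)+3)⁻¹ := by
        intro n
        have hne : ((n:ℝ)+3) ≠ 0 := by positivity
        field_simp
        ring
      simp only [heq]
      simpa using (tendsto_const_nhds (x := (1:ℝ)) (f := atTop)).sub hinv
    have hpow : Filter.Tendsto (fun n : ℕ => (((n:ℝ)+2)/((n:ℝ)+3))^r) atTop (nhds 1) := by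
      have hcont : ContinuousAt (fun x : ℝ => x ^ r) 1 :=
        Real.continuousAt_rpow_const 1 r (Or.inl one_ne_zero)
      have := hcont.tendsto.comp hbase
      simpa [Real.one_rpow, Function.comp_def] using this
    have heq : ∀ n : ℕ, ratio n = L * (((n:ℝ)+2)/((n:ℝ)+3))^r := by
      intro n
      rw [hratio, hL]
      have h2 : (0:ℝ) ≤ (n:ℝ)+2 := by positivity
      have h3 : (0:ℝ) < (n:ℝ)+3 := by positivity
      rw [Real.div_rpow h2 h3.le]
      have hne2 : (((n:ℝ)+3):ℝ)^r ≠ 0 := (Real.rpow_pos_of_pos h3 r).ne'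
      field_simp
    have hmul := (tendsto_const_nhds (x := L) (f := (atTop : Filter ℕ))).mul hpow
    rw [mul_one] at hmul
    exact hmul.congr (fun n => (heq n).symm)
  -- all moments vanish
  have hIzero : ∀ n, I n = 0 := by
    by_contra hcon
    push_neg at hcon
    obtain ⟨k0, hk0⟩ := hcon
    have hk0pos : 0 < I k0 := lt_of_le_of_ne (hInonneg k0) (Ne.symm hk0)
    set ρ : ℝ := (1 + L)/2 with hρ
    have hρ1 : 1 < ρ := by rw [hρ]; linarith
    have hρL : ρ < L := by rw [hρ]; linarith
    obtain ⟨K, hK⟩ := (hratiotend.eventually (eventually_gt_nhds hρL)).exists_forall_of_atTop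
    set K' := max K k0 with hK'
    have hIK' : 0 < I K' := by
      have : ∀ j : ℕ, 0 < I (k0 + j) := by
        intro j
        induction j with
        | zero => simpa using hk0pos
        | succ i ih =>
          rw [show k0 + (i+1) = (k0+i) + 1 from rfl, hrec]
          exact mul_pos (hratiopos _) ih
      have := this (K' - k0)
      rwa [Nat.add_sub_cancel' (le_max_right K k0)] at this
    have hgrow : ∀ j : ℕ, ρ^j * I K' ≤ I (K' + j) := by
      intro j
      induction j with
      | zero => simp
      | succ i ih =>
        rw [show K' + (i+1) = (K'+i) + 1 from rfl, hrec]
        calc ρ^(i+1) * I K' = ρ * (ρ^i * I K') := by ring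
          _ ≤ ρ * I (K'+i) := by
              apply mul_le_mul_of_nonneg_left ih (by linarith)
          _ ≤ ratio (K'+i) * I (K'+i) := by
              apply mul_le_mul_of_nonneg_right _ (hInonneg _)
              exact (hK (K'+i) (le_trans (le_max_left K k0) (Nat.le_add_right _ _))).le
    have hub : ∀ j : ℕ, ρ^j ≤ (∫ q, ‖q‖ ∂π) / I K' := by
      intro j
      rw [le_div_iff₀ hIK']
      exact (hgrow j).trans (hIle _)
    obtain ⟨j, hj⟩ := ((tendsto_pow_atTop_atTop_of_one_lt hρ1).eventually_gt_atTop
      ((∫ q, ‖q‖ ∂π) / I K')).exists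
    exact absurd (hub j) (not_le.mpr hj)
  -- coordinates vanish a.e.
  have haezero : ∀ᵐ q ∂π, q = (0 : EllOne) := by
    have hco : ∀ n : ℕ, ∀ᵐ q ∂π, coords q n = 0 := by
      intro n
      have h := (integral_eq_zero_iff_of_nonneg_ae ?_ (hcint n)).mp (hIzero n)
      · filter_upwards [h] with q hq
        exact hq
      · filter_upwards [haeNonneg] with q hq
        exact hq n
    have := (ae_all_iff).mpr hco
    filter_upwards [this] with q hq
    apply lp.ext
    funext n
    simpa [coords] using hq n
  -- conclude
  have hmap : Measure.map (fun q : EllOne => q) π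
      = Measure.map (fun _ : EllOne => (0 : EllOne)) π := by
    apply Measure.map_congr
    filter_upwards [haezero] with q hq
    exact hq
  have hid : Measure.map (fun q : EllOne => q) π = π := Measure.map_id
  rw [← hid, hmap, Measure.map_const, measure_univ, one_smul]
end

section
/- Let ν be a finite Borel measure on [0,∞), let K_a > 0, let a : [0,∞) → [0,∞) be measurable with a(x) ≤ K_a(1+x) for all x ≥ 0, and let Φ : [0,∞) → [0,∞) be differentiable with derivative Φ' nonnegative and nondecreasing, satisfying x·Φ'(x) ≤ 2Φ(x) for all x ≥ 0. Then for every R > 0, ∫_{[0,∞)} Φ'(x)·a(x) dν(x) ≤ K_a·Φ'(R)·ν([0,∞)) + 2K_a·(1 + 1/R)·∫_{[0,∞)} Φ(x) dν(x). -/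
open MeasureTheory

theorem moment_drift_estimate
    (ν : Measure ℝ) [IsFiniteMeasure ν] (hν : ν (Set.Iio (0 : ℝ)) = 0)
    (Ka : ℝ) (hKa : 0 < Ka)
    (a : ℝ → ℝ) (ham : Measurable a)
    (ha0 : ∀ x : ℝ, 0 ≤ x → 0 ≤ a x)
    (hab : ∀ x : ℝ, 0 ≤ x → a x ≤ Ka * (1 + x))
    (Phi Phi' : ℝ → ℝ)
    (hPhi0 : ∀ x : ℝ, 0 ≤ x → 0 ≤ Phi x)
    (hPhideriv : ∀ x ∈ Set.Ici (0 : ℝ), HasDerivWithinAt Phi (Phi' x) (Set.Ici 0) x)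
    (hPhi'0 : ∀ x : ℝ, 0 ≤ x → 0 ≤ Phi' x)
    (hPhi'mono : MonotoneOn Phi' (Set.Ici (0 : ℝ)))
    (hxPhi' : ∀ x : ℝ, 0 ≤ x → x * Phi' x ≤ 2 * Phi x)
    (R : ℝ) (hR : 0 < R) :
    ∫⁻ x, ENNReal.ofReal (Phi' x * a x) ∂ν
      ≤ ENNReal.ofReal (Ka * Phi' R) * ν Set.univ
        + ENNReal.ofReal (2 * Ka * (1 + 1 / R)) * ∫⁻ x, ENNReal.ofReal (Phi x) ∂ν := by
  have hc2 : (0:ℝ) ≤ 2 * Ka * (1 + 1 / R) := by positivity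
  have hae : ∀ᵐ x ∂ν, (0:ℝ) ≤ x := by
    rw [MeasureTheory.ae_iff]
    convert hν using 2
    ext x
    simp [not_le]
  have key : ∫⁻ x, ENNReal.ofReal (Phi' x * a x) ∂ν
      ≤ ∫⁻ x, (ENNReal.ofReal (Ka * Phi' R)
          + ENNReal.ofReal (2 * Ka * (1 + 1 / R)) * ENNReal.ofReal (Phi x)) ∂ν := by
    refine lintegral_mono_ae ?_
    filter_upwards [hae] with x hx
    have hPx0 : 0 ≤ Phi x := hPhi0 x hx
    have hP'x0 : 0 ≤ Phi' x := hPhi'0 x hx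
    have hP'R0 : 0 ≤ Phi' R := hPhi'0 R hR.le
    have hreal : Phi' x * a x ≤ Ka * Phi' R + 2 * Ka * (1 + 1 / R) * Phi x := by
      have h1 : Phi' x * a x ≤ Phi' x * (Ka * (1 + x)) :=
        mul_le_mul_of_nonneg_left (hab x hx) hP'x0
      have h3 : x * Phi' x ≤ 2 * Phi x := hxPhi' x hx
      have h2 : Phi' x ≤ Phi' R + 2 * Phi x * (1 / R) := by
        rcases le_total x R with h | h
        · have := hPhi'mono hx hR.le h
          have : 0 ≤ 2 * Phi x * (1 / R) := by positivity
          linarith [hPhi'mono hx hR.le h]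
        · have hR' : R * Phi' x ≤ x * Phi' x :=
            mul_le_mul_of_nonneg_right h hP'x0
          have hPx : Phi' x ≤ 2 * Phi x * (1 / R) := by
            rw [mul_one_div, le_div_iff₀ hR]; nlinarith
          linarith
      nlinarith [mul_le_mul_of_nonneg_left h2 hKa.le]
    calc ENNReal.ofReal (Phi' x * a x)
        ≤ ENNReal.ofReal (Ka * Phi' R + 2 * Ka * (1 + 1 / R) * Phi x) :=
          ENNReal.ofReal_le_ofReal hreal
      _ = ENNReal.ofReal (Ka * Phi' R)
          + ENNReal.ofReal (2 * Ka * (1 + 1 / R)) * ENNReal.ofReal (Phi x) := by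
          rw [ENNReal.ofReal_add (by positivity) (by positivity),
            ENNReal.ofReal_mul hc2]
  refine key.trans ?_
  rw [lintegral_add_left measurable_const, lintegral_const,
    lintegral_const_mul' _ _ ENNReal.ofReal_ne_top]
end

section
/- Let E be a measurable space, ν a finite measure on E, H : E → [0,∞) measurable, Φ : [0,∞) → [0,∞) measurable, n₀ ≥ 0 a real number, and h : E → [0,∞) measurable with h(x) ≤ H(x) whenever H(x) > n₀. Then for every real n ≥ max(n₀, 1) such that Φ(y) > 0 for all y > n, one has ∫_{{x : H(x) > n}} (1 + h(x)) dν(x) ≤ (1/n + sup_{y > n} y/Φ(y)) · ∫_E (H(x) + Φ(H(x))) dν(x). -/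
open MeasureTheory NNReal

theorem superlevel_integral_bound
    {E : Type*} [MeasurableSpace E]
    (ν : Measure E) [IsFiniteMeasure ν]
    (H h : E → ℝ≥0) (hHm : Measurable H) (hhm : Measurable h)
    (Phi : ℝ≥0 → ℝ≥0) (hPhim : Measurable Phi)
    (n₀ : ℝ≥0)
    (hh : ∀ x : E, n₀ < H x → h x ≤ H x)
    (n : ℝ≥0) (hn : max n₀ 1 ≤ n)
    (hPhipos : ∀ y : ℝ≥0, n < y → 0 < Phi y) :
    ∫⁻ x in {x : E | n < H x}, (1 + (h x : ENNReal)) ∂ν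
      ≤ ((n : ENNReal)⁻¹ + ⨆ y ∈ Set.Ioi n, (y : ENNReal) / (Phi y : ENNReal)) *
          ∫⁻ x, ((H x : ENNReal) + (Phi (H x) : ENNReal)) ∂ν := by
  set S : ENNReal := ⨆ y ∈ Set.Ioi n, (y : ENNReal) / (Phi y : ENNReal) with hS
  have hn1 : (1 : ℝ≥0) ≤ n := le_trans (le_max_right _ _) hn
  have hn0 : n₀ ≤ n := le_trans (le_max_left _ _) hn
  have hnne : (n : ENNReal) ≠ 0 := by
    exact_mod_cast (lt_of_lt_of_le one_pos hn1).ne'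
  have key : ∀ x ∈ {x : E | n < H x},
      (1 + (h x : ENNReal)) ≤ ((n : ENNReal)⁻¹ + S) * ((H x : ENNReal) + (Phi (H x) : ENNReal)) := by
    intro x hx
    simp only [Set.mem_setOf_eq] at hx
    have h1 : (1 : ENNReal) ≤ (n : ENNReal)⁻¹ * (H x : ENNReal) := by
      rw [← ENNReal.inv_mul_cancel hnne (by simp)]
      exact mul_le_mul_right (by exact_mod_cast hx.le) _
    have hPhine : ((Phi (H x) : ENNReal)) ≠ 0 := by
      exact_mod_cast (hPhipos _ hx).ne'
    have h2 : (h x : ENNReal) ≤ S * (Phi (H x) : ENNReal) := by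
      have hhx : (h x : ENNReal) ≤ (H x : ENNReal) := by
        exact_mod_cast hh x (lt_of_le_of_lt hn0 hx)
      have hHle : (H x : ENNReal) ≤ S * (Phi (H x) : ENNReal) := by
        have : (H x : ENNReal) / (Phi (H x)) ≤ S :=
          le_biSup (f := fun (y : ℝ≥0) => (y : ENNReal) / (Phi y : ENNReal)) (Set.mem_Ioi.mpr hx)
        calc (H x : ENNReal) = (H x : ENNReal) / (Phi (H x)) * (Phi (H x)) := by
              rw [ENNReal.div_mul_cancel hPhine (by simp)]
          _ ≤ S * (Phi (H x)) := mul_le_mul_left this _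
      exact hhx.trans hHle
    calc 1 + (h x : ENNReal) ≤ (n : ENNReal)⁻¹ * (H x) + S * (Phi (H x)) := add_le_add h1 h2
      _ ≤ ((n : ENNReal)⁻¹ + S) * ((H x : ENNReal) + (Phi (H x) : ENNReal)) := by
          rw [add_mul, mul_add, mul_add]
          calc (n : ENNReal)⁻¹ * (H x) + S * (Phi (H x))
              ≤ ((n : ENNReal)⁻¹ * (H x) + (n : ENNReal)⁻¹ * (Phi (H x))) + S * (Phi (H x)) := by
                gcongr <;> simp
            _ ≤ _ := by gcongr <;> simp [le_add_iff_nonneg_left]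
  have hmeas : MeasurableSet {x : E | n < H x} := measurableSet_lt measurable_const hHm
  calc ∫⁻ x in {x : E | n < H x}, (1 + (h x : ENNReal)) ∂ν
      ≤ ∫⁻ x in {x : E | n < H x},
          ((n : ENNReal)⁻¹ + S) * ((H x : ENNReal) + (Phi (H x) : ENNReal)) ∂ν :=
        setLIntegral_mono' hmeas key
    _ ≤ ∫⁻ x, ((n : ENNReal)⁻¹ + S) * ((H x : ENNReal) + (Phi (H x) : ENNReal)) ∂ν :=
        setLIntegral_le_lintegral _ _
    _ = ((n : ENNReal)⁻¹ + S) * ∫⁻ x, ((H x : ENNReal) + (Phi (H x) : ENNReal)) ∂ν := by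
        rw [lintegral_const_mul]
        exact (hHm.coe_nnreal_ennreal).add ((hPhim.comp hHm).coe_nnreal_ennreal)
end
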